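/- Under the IV identification assumptions (SUTVA, independence of the instrument Z from potential outcomes and potential treatments, monotonicity D(1) ≥ D(0), exclusion restriction, and P(D(1)=1) > P(D(0)=1)), the CDF of the potential outcome under treatment for compliers satisfies F_co^{(1)}(t) = [E(1{Y ≤ t}·D | Z=1) − E(1{Y ≤ t}·D | Z=0)] / [E(D | Z=1) − E(D | Z=0)] for all t. -/

import Mathlib

open MeasureTheory ProbabilityTheory

lemma cond_integral_indicator_of_indep {Ω : Type*} [MeasurableSpace Ω]
    (μ : Measure Ω) [IsProbabilityMeasure μ]
    (Z : Ω → ℝ) (W : Ω → ℝ × ℝ × ℝ × ℝ) (hZ : Measurable Z) (hW : Measurable W)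
    (hindep : IndepFun Z W μ) (z : ℝ) (hz : μ {ω | Z ω = z} ≠ 0)
    (S : Set (ℝ × ℝ × ℝ × ℝ)) (hS : MeasurableSet S)
    (f : Ω → ℝ) (hf : ∀ ω, Z ω = z → f ω = S.indicator (fun _ => (1:ℝ)) (W ω)) :
    ∫ ω, f ω ∂μ[|{ω | Z ω = z}] = (μ (W ⁻¹' S)).toReal := by
  have hsm : MeasurableSet {ω | Z ω = z} := hZ (measurableSet_singleton z)
  have hg1 : Measurable (fun x : ℝ => if x = z then (1:ℝ) else 0) :=
    Measurable.ite (measurableSet_singleton z) measurable_const measurable_const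
  have hg2 : Measurable (S.indicator (fun _ => (1:ℝ))) :=
    measurable_const.indicator hS
  have hrestr : ∫ ω in {ω | Z ω = z}, f ω ∂μ
      = ∫ ω, ((fun x => if x = z then (1:ℝ) else 0) ∘ Z) ω *
          ((S.indicator (fun _ => (1:ℝ))) ∘ W) ω ∂μ := by
    rw [← integral_indicator hsm]
    refine integral_congr_ae (Filter.Eventually.of_forall fun ω => ?_)
    by_cases h : Z ω = z
    · simp [Set.indicator, h, hf ω h]
    · simp [Set.indicator, h]
  have hmul := (hindep.comp hg1 hg2).integral_mul_eq_mul_integral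
    ((hg1.comp hZ).aestronglyMeasurable) ((hg2.comp hW).aestronglyMeasurable)
  have h1 : ∫ ω, ((fun x => if x = z then (1:ℝ) else 0) ∘ Z) ω ∂μ
      = (μ {ω | Z ω = z}).toReal := by
    rw [← measureReal_def, ← integral_indicator_one hsm]
    refine integral_congr_ae (Filter.Eventually.of_forall fun ω => ?_)
    by_cases h : Z ω = z <;> simp [Set.indicator, h, Function.comp]
  have h2 : ∫ ω, ((S.indicator (fun _ => (1:ℝ))) ∘ W) ω ∂μ
      = (μ (W ⁻¹' S)).toReal := by
    rw [← measureReal_def, ← integral_indicator_one (hW hS)]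
    refine integral_congr_ae (Filter.Eventually.of_forall fun ω => ?_)
    by_cases h : W ω ∈ S <;> simp [Set.indicator, h, Function.comp]
  have hne : (μ {ω | Z ω = z}).toReal ≠ 0 :=
    ENNReal.toReal_ne_zero.2 ⟨hz, measure_ne_top μ _⟩
  rw [ProbabilityTheory.cond, integral_smul_measure, smul_eq_mul, ENNReal.toReal_inv, hrestr]
  rw [show (fun ω => ((fun x => if x = z then (1:ℝ) else 0) ∘ Z) ω *
          ((S.indicator (fun _ => (1:ℝ))) ∘ W) ω)
      = ((fun x => if x = z then (1:ℝ) else 0) ∘ Z) *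
          ((S.indicator (fun _ => (1:ℝ))) ∘ W) from rfl] at *
  rw [hmul, h1, h2, ← mul_assoc, inv_mul_cancel₀ hne, one_mul]

lemma measure_toReal_sub_of_indicator {Ω : Type*} [MeasurableSpace Ω]
    (μ : Measure Ω) [IsProbabilityMeasure μ] {A B E : Set Ω}
    (hA : MeasurableSet A) (hB : MeasurableSet B) (hE : MeasurableSet E)
    (h : ∀ᵐ ω ∂μ, A.indicator (fun _ => (1:ℝ)) ω - B.indicator (fun _ => (1:ℝ)) ω
        = E.indicator (fun _ => (1:ℝ)) ω) :
    (μ A).toReal - (μ B).toReal = (μ E).toReal := by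
  have iA : Integrable (A.indicator (1 : Ω → ℝ)) μ := (integrable_const 1).indicator hA
  have iB : Integrable (B.indicator (1 : Ω → ℝ)) μ := (integrable_const 1).indicator hB
  simp only [← measureReal_def]
  rw [← integral_indicator_one hA, ← integral_indicator_one hB, ← integral_indicator_one hE,
    ← integral_sub iA iB]
  exact integral_congr_ae h

/-- IV identification of the complier-treated outcome CDF:
`F_co^{(1)}(t) = [E(1{Y≤t}·D | Z=1) − E(1{Y≤t}·D | Z=0)] / [E(D|Z=1) − E(D|Z=0)]`. -/
theorem complier_treated_cdf_identification {Ω : Type*} [MeasurableSpace Ω]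
    (μ : Measure Ω) [IsProbabilityMeasure μ]
    (Z D0 D1 Y0 Y1 D Y : Ω → ℝ)
    (hZ : Measurable Z) (hD0 : Measurable D0) (hD1 : Measurable D1)
    (hY0 : Measurable Y0) (hY1 : Measurable Y1)
    (hZbin : ∀ ω, Z ω = 0 ∨ Z ω = 1)
    (hD0bin : ∀ ω, D0 ω = 0 ∨ D0 ω = 1)
    (hD1bin : ∀ ω, D1 ω = 0 ∨ D1 ω = 1)
    (hD : ∀ ω, D ω = Z ω * D1 ω + (1 - Z ω) * D0 ω)
    (hYobs : ∀ ω, Y ω = D ω * Y1 ω + (1 - D ω) * Y0 ω)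
    (hindep : IndepFun Z (fun ω => (Y0 ω, Y1 ω, D0 ω, D1 ω)) μ)
    (hmono : ∀ᵐ ω ∂μ, D0 ω ≤ D1 ω)
    (hnonzero : μ {ω | D0 ω = 1} < μ {ω | D1 ω = 1})
    (hZ1 : 0 < μ {ω | Z ω = 1}) (hZ0 : 0 < μ {ω | Z ω = 0}) :
    ∀ t : ℝ,
      (μ[|{ω | D1 ω = 1 ∧ D0 ω = 0}] {ω | Y1 ω ≤ t}).toReal =
        ((∫ ω, (if Y ω ≤ t then D ω else 0) ∂μ[|{ω | Z ω = 1}]) -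
            ∫ ω, (if Y ω ≤ t then D ω else 0) ∂μ[|{ω | Z ω = 0}]) /
          ((∫ ω, D ω ∂μ[|{ω | Z ω = 1}]) - ∫ ω, D ω ∂μ[|{ω | Z ω = 0}]) := by
  intro t
  classical
  have hW : Measurable (fun ω => (Y0 ω, Y1 ω, D0 ω, D1 ω)) :=
    hY0.prodMk (hY1.prodMk (hD0.prodMk hD1))
  -- on {Z = 1}, D = D1 ; on {Z = 0}, D = D0
  have hDz : ∀ z : ℝ, ∀ ω, Z ω = z → (z = 1 → D ω = D1 ω) ∧ (z = 0 → D ω = D0 ω) := by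
    intro z ω hz
    constructor <;> intro h <;> rw [hD ω, hz, h] <;> ring
  -- measurable sets in ℝ⁴
  have hS1 : MeasurableSet {p : ℝ × ℝ × ℝ × ℝ | p.2.1 ≤ t ∧ p.2.2.2 = 1} :=
    (measurableSet_le measurable_snd.fst measurable_const).inter
      (measurable_snd.snd.snd (measurableSet_singleton 1))
  have hS0 : MeasurableSet {p : ℝ × ℝ × ℝ × ℝ | p.2.1 ≤ t ∧ p.2.2.1 = 1} :=
    (measurableSet_le measurable_snd.fst measurable_const).inter
      (measurable_snd.snd.fst (measurableSet_singleton 1))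
  have hT1 : MeasurableSet {p : ℝ × ℝ × ℝ × ℝ | p.2.2.2 = 1} :=
    measurable_snd.snd.snd (measurableSet_singleton 1)
  have hT0 : MeasurableSet {p : ℝ × ℝ × ℝ × ℝ | p.2.2.1 = 1} :=
    measurable_snd.snd.fst (measurableSet_singleton 1)
  -- the four conditional expectations
  have e1 : ∫ ω, (if Y ω ≤ t then D ω else 0) ∂μ[|{ω | Z ω = 1}]
      = (μ {ω | Y1 ω ≤ t ∧ D1 ω = 1}).toReal := by
    refine cond_integral_indicator_of_indep μ Z _ hZ hW hindep 1 hZ1.ne' _ hS1 _ ?_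
    intro ω hz
    have hDω : D ω = D1 ω := ((hDz 1 ω hz).1 rfl)
    rcases hD1bin ω with h | h
    · simp [Set.indicator, hDω, h]
    · have hYω : Y ω = Y1 ω := by rw [hYobs ω, hDω, h]; ring
      simp [Set.indicator, hDω, h, hYω]
  have e0 : ∫ ω, (if Y ω ≤ t then D ω else 0) ∂μ[|{ω | Z ω = 0}]
      = (μ {ω | Y1 ω ≤ t ∧ D0 ω = 1}).toReal := by
    refine cond_integral_indicator_of_indep μ Z _ hZ hW hindep 0 hZ0.ne' _ hS0 _ ?_
    intro ω hz
    have hDω : D ω = D0 ω := ((hDz 0 ω hz).2 rfl)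
    rcases hD0bin ω with h | h
    · simp [Set.indicator, hDω, h]
    · have hYω : Y ω = Y1 ω := by rw [hYobs ω, hDω, h]; ring
      simp [Set.indicator, hDω, h, hYω]
  have d1 : ∫ ω, D ω ∂μ[|{ω | Z ω = 1}] = (μ {ω | D1 ω = 1}).toReal := by
    refine cond_integral_indicator_of_indep μ Z _ hZ hW hindep 1 hZ1.ne' _ hT1 _ ?_
    intro ω hz
    have hDω : D ω = D1 ω := ((hDz 1 ω hz).1 rfl)
    rcases hD1bin ω with h | h <;> simp [Set.indicator, hDω, h]
  have d0 : ∫ ω, D ω ∂μ[|{ω | Z ω = 0}] = (μ {ω | D0 ω = 1}).toReal := by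
    refine cond_integral_indicator_of_indep μ Z _ hZ hW hindep 0 hZ0.ne' _ hT0 _ ?_
    intro ω hz
    have hDω : D ω = D0 ω := ((hDz 0 ω hz).2 rfl)
    rcases hD0bin ω with h | h <;> simp [Set.indicator, hDω, h]
  -- complier set
  have hC : MeasurableSet {ω | D1 ω = 1 ∧ D0 ω = 0} :=
    (hD1 (measurableSet_singleton 1)).inter (hD0 (measurableSet_singleton 0))
  have hA1 : MeasurableSet {ω | Y1 ω ≤ t ∧ D1 ω = 1} :=
    (measurableSet_le hY1 measurable_const).inter (hD1 (measurableSet_singleton 1))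
  have hA0 : MeasurableSet {ω | Y1 ω ≤ t ∧ D0 ω = 1} :=
    (measurableSet_le hY1 measurable_const).inter (hD0 (measurableSet_singleton 1))
  have hCS : MeasurableSet ({ω | D1 ω = 1 ∧ D0 ω = 0} ∩ {ω | Y1 ω ≤ t}) :=
    hC.inter (measurableSet_le hY1 measurable_const)
  -- numerator identity
  have num : (μ {ω | Y1 ω ≤ t ∧ D1 ω = 1}).toReal - (μ {ω | Y1 ω ≤ t ∧ D0 ω = 1}).toReal
      = (μ ({ω | D1 ω = 1 ∧ D0 ω = 0} ∩ {ω | Y1 ω ≤ t})).toReal := by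
    refine measure_toReal_sub_of_indicator μ hA1 hA0 hCS ?_
    filter_upwards [hmono] with ω hm
    rcases hD0bin ω with h0 | h0 <;> rcases hD1bin ω with h1 | h1 <;>
      [skip; skip; (rw [h0, h1] at hm; norm_num at hm); skip] <;>
      by_cases ht : Y1 ω ≤ t <;>
      simp [Set.indicator, h0, h1, ht]
  -- denominator identity
  have den : (μ {ω | D1 ω = 1}).toReal - (μ {ω | D0 ω = 1}).toReal
      = (μ {ω | D1 ω = 1 ∧ D0 ω = 0}).toReal := by
    refine measure_toReal_sub_of_indicator μ (hD1 (measurableSet_singleton 1))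
      (hD0 (measurableSet_singleton 1)) hC ?_
    filter_upwards [hmono] with ω hm
    rcases hD0bin ω with h0 | h0 <;> rcases hD1bin ω with h1 | h1 <;>
      [skip; skip; (rw [h0, h1] at hm; norm_num at hm); skip] <;>
      simp [Set.indicator, h0, h1]
  -- denominator positivity
  have hlt : (μ {ω | D0 ω = 1}).toReal < (μ {ω | D1 ω = 1}).toReal :=
    (ENNReal.toReal_lt_toReal (measure_ne_top μ _) (measure_ne_top μ _)).2 hnonzero
  have hCpos : 0 < (μ {ω | D1 ω = 1 ∧ D0 ω = 0}).toReal := by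
    rw [← den]; linarith
  have hCne : μ {ω | D1 ω = 1 ∧ D0 ω = 0} ≠ 0 := by
    intro h; rw [h] at hCpos; simp at hCpos
  -- conclude
  rw [e1, e0, d1, d0, num, den, cond_apply hC μ {ω | Y1 ω ≤ t}, ENNReal.toReal_mul,
    ENNReal.toReal_inv, inv_mul_eq_div]
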